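/- Let A ∈ ℝ^{N×N} be symmetric negative semidefinite, B ∈ ℝ^{N×N} symmetric positive definite, and S ∈ ℝ^{N×K}. Then each entry of the matrix-valued function F(z) = Sᵀ (A + zB)⁻¹ S is a holomorphic (complex differentiable) function of z on the open set ℂ \ [0,∞). -/

import Mathlib

open Matrix Complex

lemma diffOn_det {n : ℕ} {s : Set ℂ} (f : ℂ → Matrix (Fin n) (Fin n) ℂ)
    (hf : ∀ i j, DifferentiableOn ℂ (fun z => f z i j) s) :
    DifferentiableOn ℂ (fun z => (f z).det) s := by
  simp only [Matrix.det_apply', Units.smul_def, zsmul_eq_mul]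
  apply DifferentiableOn.fun_sum
  intro σ _
  apply DifferentiableOn.const_mul
  apply DifferentiableOn.fun_finsetProd
  intro i _
  exact hf _ _

lemma quad_map_eq {N : ℕ} (A : Matrix (Fin N) (Fin N) ℝ) (hA : A.IsSymm) (x : Fin N → ℂ) :
    star x ⬝ᵥ (A.map Complex.ofReal) *ᵥ x =
      (((fun i => (x i).re) ⬝ᵥ A *ᵥ (fun i => (x i).re) +
        (fun i => (x i).im) ⬝ᵥ A *ᵥ (fun i => (x i).im) : ℝ) : ℂ) := by
  have hsym := hA.apply
  apply Complex.ext
  · simp only [dotProduct, mulVec, Matrix.map_apply, Pi.star_apply, Complex.star_def,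
      Finset.mul_sum, Complex.re_sum, Complex.mul_re,
      Complex.conj_re, Complex.conj_im, Complex.ofReal_re, Complex.ofReal_im,
      Complex.ofReal_add, Complex.add_re, mul_zero, zero_mul, sub_zero, add_zero, neg_mul, neg_neg,
      Complex.re_sum]
    rw [← Finset.sum_add_distrib]
    refine Finset.sum_congr rfl fun i _ => ?_
    rw [← Finset.sum_add_distrib]
    refine Finset.sum_congr rfl fun j _ => ?_
    simp only [Complex.mul_im, Complex.mul_re, Complex.ofReal_re, Complex.ofReal_im]
    ring
  · simp only [dotProduct, mulVec, Matrix.map_apply, Pi.star_apply, Complex.star_def,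
      Finset.mul_sum, Complex.im_sum, Complex.mul_im,
      Complex.conj_re, Complex.conj_im, Complex.ofReal_re, Complex.ofReal_im,
      Complex.ofReal_add, Complex.add_im, mul_zero, zero_mul, add_zero, zero_add, sub_zero,
      Finset.sum_const_zero, neg_mul, ← sub_eq_add_neg, Finset.sum_sub_distrib]
    rw [sub_eq_zero]
    conv_lhs => rw [Finset.sum_comm]
    refine Finset.sum_congr rfl fun i _ => Finset.sum_congr rfl fun j _ => ?_
    rw [hsym i j]
    simp only [Complex.mul_im, Complex.mul_re, Complex.ofReal_re, Complex.ofReal_im]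
    ring

lemma det_ne_zero_aux {N : ℕ} (A B : Matrix (Fin N) (Fin N) ℝ)
    (hA : A.IsSymm) (hAneg : ∀ x : Fin N → ℝ, x ⬝ᵥ A.mulVec x ≤ 0)
    (hB : B.PosDef) {z : ℂ} (hz : z.im ≠ 0 ∨ z.re < 0) :
    (A.map Complex.ofReal + z • B.map Complex.ofReal).det ≠ 0 := by
  intro hdet
  obtain ⟨x, hx0, hx⟩ := (Matrix.exists_mulVec_eq_zero_iff).2 hdet
  set u : Fin N → ℝ := fun i => (x i).re with hu
  set v : Fin N → ℝ := fun i => (x i).im with hv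
  have key : (0 : ℂ) = star x ⬝ᵥ (A.map Complex.ofReal) *ᵥ x
      + z * (star x ⬝ᵥ (B.map Complex.ofReal) *ᵥ x) := by
    rw [← smul_eq_mul, ← dotProduct_smul, ← smul_mulVec, ← dotProduct_add, ← add_mulVec,
      hx, dotProduct_zero]
  rw [quad_map_eq A hA x, quad_map_eq B (by simpa [Matrix.IsHermitian, Matrix.IsSymm] using hB.1) x] at key
  set a : ℝ := u ⬝ᵥ A *ᵥ u + v ⬝ᵥ A *ᵥ v with ha
  set b : ℝ := u ⬝ᵥ B *ᵥ u + v ⬝ᵥ B *ᵥ v with hbdef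
  have ha0 : a ≤ 0 := add_nonpos (hAneg u) (hAneg v)
  have huv : u ≠ 0 ∨ v ≠ 0 := by
    by_contra h
    push_neg at h
    apply hx0
    funext i
    apply Complex.ext
    · exact congrFun h.1 i
    · exact congrFun h.2 i
  have hBsd := hB.posSemidef
  have hBq : ∀ y : Fin N → ℝ, 0 ≤ y ⬝ᵥ B *ᵥ y := fun y => by simpa using hBsd.dotProduct_mulVec_nonneg y
  have hBq' : ∀ y : Fin N → ℝ, y ≠ 0 → 0 < y ⬝ᵥ B *ᵥ y := fun y hy => by simpa using hB.dotProduct_mulVec_pos hy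
  have hb0 : 0 < b := by
    rcases huv with h | h
    · exact add_pos_of_pos_of_nonneg (hBq' u h) (hBq v)
    · exact add_pos_of_nonneg_of_pos (hBq u) (hBq' v h)
  have hzval : z = ((-a / b : ℝ) : ℂ) := by
    have hb0' : (b : ℂ) ≠ 0 := by exact_mod_cast hb0.ne'
    rw [Complex.ofReal_div, Complex.ofReal_neg, eq_div_iff hb0']
    linear_combination -key
  rcases hz with h | h
  · rw [hzval] at h
    simp at h
  · rw [hzval] at h
    simp only [Complex.ofReal_re] at h
    have : 0 ≤ -a / b := div_nonneg (neg_nonneg.2 ha0) hb0.le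
    linarith

theorem stmt7 {N K : ℕ} (A B : Matrix (Fin N) (Fin N) ℝ) (S : Matrix (Fin N) (Fin K) ℝ)
    (hA : A.IsSymm) (hAneg : ∀ x : Fin N → ℝ, x ⬝ᵥ A.mulVec x ≤ 0)
    (hB : B.PosDef) :
    ∀ (i : Fin K) (j : Fin K),
      DifferentiableOn ℂ
        (fun z : ℂ =>
          ((S.map Complex.ofReal)ᵀ *
            (A.map Complex.ofReal + z • B.map Complex.ofReal)⁻¹ *
            S.map Complex.ofReal) i j)
        {z : ℂ | z.im ≠ 0 ∨ z.re < 0} := by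
  intro i j
  set s : Set ℂ := {z : ℂ | z.im ≠ 0 ∨ z.re < 0} with hs
  set M : ℂ → Matrix (Fin N) (Fin N) ℂ :=
    fun z => A.map Complex.ofReal + z • B.map Complex.ofReal with hM
  have hdet : ∀ z ∈ s, (M z).det ≠ 0 := fun z hz =>
    det_ne_zero_aux A B hA hAneg hB hz
  have hentries : ∀ k l, DifferentiableOn ℂ (fun z => M z k l) s := by
    intro k l
    simp only [hM, Matrix.add_apply, Matrix.smul_apply, smul_eq_mul]
    exact (differentiable_const _).differentiableOn.add
      ((differentiable_id.mul (differentiable_const _)).differentiableOn)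
  have hdetD : DifferentiableOn ℂ (fun z => (M z).det) s := diffOn_det M hentries
  have hadj : ∀ k l, DifferentiableOn ℂ (fun z => (M z).adjugate k l) s := by
    intro k l
    simp only [Matrix.adjugate_apply]
    apply diffOn_det
    intro a b
    by_cases hal : a = l
    · simp only [hal, Matrix.updateRow_apply, if_pos rfl]
      exact differentiableOn_const _
    · simp only [Matrix.updateRow_apply, if_neg hal]
      exact hentries a b
  have hinv : ∀ k l, DifferentiableOn ℂ (fun z => (M z)⁻¹ k l) s := by
    intro k l
    apply DifferentiableOn.congr ((hdetD.inv (hdet)).mul (hadj k l))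
    intro z hz
    simp [Matrix.inv_def, Ring.inverse_eq_inv', Matrix.smul_apply, smul_eq_mul]
  simp only [Matrix.mul_apply]
  apply DifferentiableOn.fun_sum
  intro l _
  apply DifferentiableOn.mul _ (differentiableOn_const _)
  apply DifferentiableOn.fun_sum
  intro k _
  exact (differentiableOn_const _).mul (hinv k l)
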